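/- Let A_l ∈ ℂ^{n_l×n_l}, B_l ∈ ℂ^{n_l×m_l}, C_l ∈ ℂ^{m_l×n_l} and A_r ∈ ℂ^{n_r×n_r}, B_r ∈ ℂ^{n_r×m_r}, C_r ∈ ℂ^{m_r×n_r}. Define 𝐀_o = [[A_l ⊗ I_{m_r}, (B_l ⊗ I_{m_r})(I_{m_l} ⊗ C_r)],[0, I_{m_l} ⊗ A_r]], 𝐁_o = [B_l ⊗ I_{m_r} ; I_{m_l} ⊗ B_r], 𝐂_o = [C_l ⊗ I_{m_r} I_{m_l} ⊗ C_r]. Let T be an invertible (n_lm_r+m_ln_r)×(n_lm_r+m_ln_r) matrix and set 𝐀 = T^{-1}𝐀_oT, 𝐁 = T^{-1}𝐁_o, 𝐂 = 𝐂_oT. Let u ∈ ℂ^{m_r}, v ∈ ℂ^{m_l} with u*u = 1, v*v = 1, and define Π̂₁ = T^{-1} diag(I_{n_l} ⊗ uu*, 0_{m_ln_r}) T and Π̂₂ = T^{-1} diag(0_{n_lm_r}, vv* ⊗ I_{n_r}) T. Then for every z ∈ ℂ such that zI_{n_l} − A_l and zI_{n_r} − A_r are invertible, the matrix 𝐅(z)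 = I_{m_lm_r} + 𝐂(zI_{n_lm_r+m_ln_r} − 𝐀)^{-1}𝐁 satisfies the tensor factorization 𝐅(z) = F_l(z) ⊗ F_r(z), where F_l(z) = (I_{m_l} ⊗ u*) 𝐂 Π̂₁ (zI − 𝐀)^{-1} Π̂₁ 𝐁 (I_{m_l} ⊗ u) + I_{m_l} and F_r(z) = (v* ⊗ I_{m_r}) 𝐂 Π̂₂ (zI − 𝐀)^{-1} Π̂₂ 𝐁 (v ⊗ I_{m_r}) + I_{m_r}. -/

import Mathlib

open Matrix
open scoped Kronecker

private lemma sub_kron {l m n p : Type*} (A B : Matrix l m ℂ) (C : Matrix n p ℂ) :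
    (A - B) ⊗ₖ C = A ⊗ₖ C - B ⊗ₖ C := by
  ext ⟨i, j⟩ ⟨k, l'⟩
  simp [sub_mul]

private lemma kron_sub {l m n p : Type*} (A : Matrix l m ℂ) (B C : Matrix n p ℂ) :
    A ⊗ₖ (B - C) = A ⊗ₖ B - A ⊗ₖ C := by
  ext ⟨i, j⟩ ⟨k, l'⟩
  simp [mul_sub]

private lemma fromBlocks_sub' {l m n o : Type*} (A A' : Matrix n l ℂ) (B B' : Matrix n m ℂ)
    (C C' : Matrix o l ℂ) (D D' : Matrix o m ℂ) :
    fromBlocks A B C D - fromBlocks A' B' C' D'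
      = fromBlocks (A - A') (B - B') (C - C') (D - D') := by
  ext (i | i) (j | j) <;> simp

private lemma kron_mul_kron_assoc {l m n l' m' n' p : Type*}
    [Fintype m] [Fintype m'] [Fintype n] [Fintype n']
    (A : Matrix l m ℂ) (B : Matrix m n ℂ) (A' : Matrix l' m' ℂ) (B' : Matrix m' n' ℂ)
    (E : Matrix (n × n') p ℂ) :
    (A ⊗ₖ A') * ((B ⊗ₖ B') * E) = ((A * B) ⊗ₖ (A' * B')) * E := by
  rw [← Matrix.mul_assoc, ← Matrix.mul_kronecker_mul]

private lemma mul_inv_cancel_left' {n κ : Type*} [Fintype n] [DecidableEq n]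
    (T : Matrix n n ℂ) (h : T * T⁻¹ = 1) (X : Matrix n κ ℂ) : T * (T⁻¹ * X) = X := by
  rw [← Matrix.mul_assoc, h, Matrix.one_mul]

private lemma inv_mul_cancel_left' {n κ : Type*} [Fintype n] [DecidableEq n]
    (T : Matrix n n ℂ) (h : T⁻¹ * T = 1) (X : Matrix n κ ℂ) : T⁻¹ * (T * X) = X := by
  rw [← Matrix.mul_assoc, h, Matrix.one_mul]

private lemma reindex_prodUnique_kron_one {m : ℕ} (X : Matrix (Fin m) (Fin m) ℂ) :
    Matrix.reindex (Equiv.prodUnique (Fin m) (Fin 1)) (Equiv.prodUnique (Fin m) (Fin 1))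
      (X ⊗ₖ (1 : Matrix (Fin 1) (Fin 1) ℂ)) = X := by
  ext i j
  simp [Matrix.one_apply]

private lemma reindex_uniqueProd_one_kron {m : ℕ} (X : Matrix (Fin m) (Fin m) ℂ) :
    Matrix.reindex (Equiv.uniqueProd (Fin m) (Fin 1)) (Equiv.uniqueProd (Fin m) (Fin 1))
      ((1 : Matrix (Fin 1) (Fin 1) ℂ) ⊗ₖ X) = X := by
  ext i j
  simp [Matrix.one_apply]

theorem tensor_factorization (nl nr ml mr : ℕ)
    (Al : Matrix (Fin nl) (Fin nl) ℂ) (Bl : Matrix (Fin nl) (Fin ml) ℂ)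
    (Cl : Matrix (Fin ml) (Fin nl) ℂ)
    (Ar : Matrix (Fin nr) (Fin nr) ℂ) (Br : Matrix (Fin nr) (Fin mr) ℂ)
    (Cr : Matrix (Fin mr) (Fin nr) ℂ)
    (T : Matrix ((Fin nl × Fin mr) ⊕ (Fin ml × Fin nr))
        ((Fin nl × Fin mr) ⊕ (Fin ml × Fin nr)) ℂ) (hT : IsUnit T)
    (u : Matrix (Fin mr) (Fin 1) ℂ) (v : Matrix (Fin ml) (Fin 1) ℂ)
    (hu : uᴴ * u = 1) (hv : vᴴ * v = 1)
    (z : ℂ)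
    (hl : IsUnit (z • (1 : Matrix (Fin nl) (Fin nl) ℂ) - Al))
    (hr : IsUnit (z • (1 : Matrix (Fin nr) (Fin nr) ℂ) - Ar)) :
    let Ao := fromBlocks (Al ⊗ₖ (1 : Matrix (Fin mr) (Fin mr) ℂ))
        ((Bl ⊗ₖ (1 : Matrix (Fin mr) (Fin mr) ℂ)) * ((1 : Matrix (Fin ml) (Fin ml) ℂ) ⊗ₖ Cr))
        0 ((1 : Matrix (Fin ml) (Fin ml) ℂ) ⊗ₖ Ar)
    let Bo := fromRows (Bl ⊗ₖ (1 : Matrix (Fin mr) (Fin mr) ℂ))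
        ((1 : Matrix (Fin ml) (Fin ml) ℂ) ⊗ₖ Br)
    let Co := fromCols (Cl ⊗ₖ (1 : Matrix (Fin mr) (Fin mr) ℂ))
        ((1 : Matrix (Fin ml) (Fin ml) ℂ) ⊗ₖ Cr)
    let A := T⁻¹ * Ao * T
    let B := T⁻¹ * Bo
    let C := Co * T
    let Ph1 := T⁻¹ * fromBlocks ((1 : Matrix (Fin nl) (Fin nl) ℂ) ⊗ₖ (u * uᴴ)) 0 0
        (0 : Matrix (Fin ml × Fin nr) (Fin ml × Fin nr) ℂ) * T
    let Ph2 := T⁻¹ * fromBlocks (0 : Matrix (Fin nl × Fin mr) (Fin nl × Fin mr) ℂ) 0 0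
        ((v * vᴴ) ⊗ₖ (1 : Matrix (Fin nr) (Fin nr) ℂ)) * T
    let Fl := Matrix.reindex (Equiv.prodUnique (Fin ml) (Fin 1))
        (Equiv.prodUnique (Fin ml) (Fin 1))
        (((1 : Matrix (Fin ml) (Fin ml) ℂ) ⊗ₖ uᴴ) * C * Ph1 *
          (z • 1 - A)⁻¹ * Ph1 * B * ((1 : Matrix (Fin ml) (Fin ml) ℂ) ⊗ₖ u)) + 1
    let Fr := Matrix.reindex (Equiv.uniqueProd (Fin mr) (Fin 1))
        (Equiv.uniqueProd (Fin mr) (Fin 1))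
        ((vᴴ ⊗ₖ (1 : Matrix (Fin mr) (Fin mr) ℂ)) * C * Ph2 *
          (z • 1 - A)⁻¹ * Ph2 * B * (v ⊗ₖ (1 : Matrix (Fin mr) (Fin mr) ℂ))) + 1
    (1 : Matrix (Fin ml × Fin mr) (Fin ml × Fin mr) ℂ) + C * (z • 1 - A)⁻¹ * B
      = Fl ⊗ₖ Fr := by
  intro Ao Bo Co A B C Ph1 Ph2 Fl Fr
  have hT' : IsUnit T.det := (Matrix.isUnit_iff_isUnit_det T).mp hT
  have hTl : T⁻¹ * T = 1 := Matrix.nonsing_inv_mul T hT'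
  have hTr : T * T⁻¹ = 1 := Matrix.mul_nonsing_inv T hT'
  set Gl := (z • (1 : Matrix (Fin nl) (Fin nl) ℂ) - Al)⁻¹ with hGldef
  set Gr := (z • (1 : Matrix (Fin nr) (Fin nr) ℂ) - Ar)⁻¹ with hGrdef
  have hGl : (z • (1 : Matrix (Fin nl) (Fin nl) ℂ) - Al) * Gl = 1 :=
    Matrix.mul_nonsing_inv _ ((Matrix.isUnit_iff_isUnit_det _).mp hl)
  have hGr : (z • (1 : Matrix (Fin nr) (Fin nr) ℂ) - Ar) * Gr = 1 :=
    Matrix.mul_nonsing_inv _ ((Matrix.isUnit_iff_isUnit_det _).mp hr)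
  set M := (Bl ⊗ₖ (1 : Matrix (Fin mr) (Fin mr) ℂ)) * ((1 : Matrix (Fin ml) (Fin ml) ℂ) ⊗ₖ Cr)
    with hM
  set Go := fromBlocks (Gl ⊗ₖ (1 : Matrix (Fin mr) (Fin mr) ℂ))
      ((Gl ⊗ₖ (1 : Matrix (Fin mr) (Fin mr) ℂ)) * M * ((1 : Matrix (Fin ml) (Fin ml) ℂ) ⊗ₖ Gr))
      0 ((1 : Matrix (Fin ml) (Fin ml) ℂ) ⊗ₖ Gr) with hGo
  -- the resolvent of Ao
  have hZAo : z • (1 : Matrix ((Fin nl × Fin mr) ⊕ (Fin ml × Fin nr))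
        ((Fin nl × Fin mr) ⊕ (Fin ml × Fin nr)) ℂ) - Ao =
      fromBlocks ((z • (1 : Matrix (Fin nl) (Fin nl) ℂ) - Al) ⊗ₖ 1) (-M) 0
        ((1 : Matrix (Fin ml) (Fin ml) ℂ) ⊗ₖ (z • (1 : Matrix (Fin nr) (Fin nr) ℂ) - Ar)) := by
    rw [show Ao = fromBlocks (Al ⊗ₖ (1 : Matrix (Fin mr) (Fin mr) ℂ)) M 0
      ((1 : Matrix (Fin ml) (Fin ml) ℂ) ⊗ₖ Ar) from rfl]
    rw [← Matrix.fromBlocks_one, Matrix.fromBlocks_smul, fromBlocks_sub']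
    simp [sub_kron, kron_sub, Matrix.smul_kronecker, Matrix.kronecker_smul,
      Matrix.one_kronecker_one]
  have h11 : ((z • (1 : Matrix (Fin nl) (Fin nl) ℂ) - Al) ⊗ₖ (1 : Matrix (Fin mr) (Fin mr) ℂ))
      * (Gl ⊗ₖ (1 : Matrix (Fin mr) (Fin mr) ℂ)) = 1 := by
    rw [← Matrix.mul_kronecker_mul, hGl, Matrix.one_mul, Matrix.one_kronecker_one]
  have h22 : ((1 : Matrix (Fin ml) (Fin ml) ℂ) ⊗ₖ (z • (1 : Matrix (Fin nr) (Fin nr) ℂ) - Ar))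
      * ((1 : Matrix (Fin ml) (Fin ml) ℂ) ⊗ₖ Gr) = 1 := by
    rw [← Matrix.mul_kronecker_mul, hGr, Matrix.one_mul, Matrix.one_kronecker_one]
  have hGoInv : (z • (1 : Matrix ((Fin nl × Fin mr) ⊕ (Fin ml × Fin nr))
        ((Fin nl × Fin mr) ⊕ (Fin ml × Fin nr)) ℂ) - Ao) * Go = 1 := by
    rw [hZAo, hGo, Matrix.fromBlocks_multiply]
    simp only [Matrix.mul_zero, Matrix.zero_mul, add_zero, zero_add, h11, h22]
    have hb : ((z • (1 : Matrix (Fin nl) (Fin nl) ℂ) - Al) ⊗ₖ (1 : Matrix (Fin mr) (Fin mr) ℂ))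
        * ((Gl ⊗ₖ (1 : Matrix (Fin mr) (Fin mr) ℂ)) * M
          * ((1 : Matrix (Fin ml) (Fin ml) ℂ) ⊗ₖ Gr))
        + -M * ((1 : Matrix (Fin ml) (Fin ml) ℂ) ⊗ₖ Gr) = 0 := by
      rw [← Matrix.mul_assoc, ← Matrix.mul_assoc, h11, Matrix.one_mul, Matrix.neg_mul]
      exact add_neg_cancel _
    rw [hb, Matrix.fromBlocks_one]
  have hA : z • (1 : Matrix ((Fin nl × Fin mr) ⊕ (Fin ml × Fin nr))
        ((Fin nl × Fin mr) ⊕ (Fin ml × Fin nr)) ℂ) - A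
      = T⁻¹ * ((z • (1 : Matrix ((Fin nl × Fin mr) ⊕ (Fin ml × Fin nr))
        ((Fin nl × Fin mr) ⊕ (Fin ml × Fin nr)) ℂ) - Ao) * T) := by
    rw [show A = T⁻¹ * Ao * T from rfl]
    rw [Matrix.sub_mul, Matrix.mul_sub, Matrix.smul_mul, Matrix.one_mul, Matrix.mul_smul,
      hTl, Matrix.mul_assoc]
  have hAinv : (z • (1 : Matrix ((Fin nl × Fin mr) ⊕ (Fin ml × Fin nr))
        ((Fin nl × Fin mr) ⊕ (Fin ml × Fin nr)) ℂ) - A)⁻¹ = T⁻¹ * (Go * T) := by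
    apply Matrix.inv_eq_right_inv
    rw [hA]
    simp only [Matrix.mul_assoc]
    rw [mul_inv_cancel_left' T hTr, ← Matrix.mul_assoc _ Go T, hGoInv, Matrix.one_mul, hTl]
  have cancel : ∀ {a b κ : Type} [Fintype a] [Fintype b] [DecidableEq a]
      (P : Matrix a b ℂ) (Q : Matrix b a ℂ), P * Q = 1 → ∀ (X : Matrix a κ ℂ),
      P * (Q * X) = X := by
    intro a b κ _ _ _ P Q h X
    rw [← Matrix.mul_assoc, h, Matrix.one_mul]
  have hCB : C * (z • (1 : Matrix ((Fin nl × Fin mr) ⊕ (Fin ml × Fin nr))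
        ((Fin nl × Fin mr) ⊕ (Fin ml × Fin nr)) ℂ) - A)⁻¹ * B = Co * (Go * Bo) := by
    rw [show C = Co * T from rfl, show B = T⁻¹ * Bo from rfl, hAinv]
    simp only [Matrix.mul_assoc, cancel T T⁻¹ hTr]
  have hXY : Co * (Go * Bo) = (Cl * (Gl * Bl)) ⊗ₖ (1 : Matrix (Fin mr) (Fin mr) ℂ)
      + ((Cl * (Gl * Bl)) ⊗ₖ (Cr * (Gr * Br))
        + (1 : Matrix (Fin ml) (Fin ml) ℂ) ⊗ₖ (Cr * (Gr * Br))) := by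
    rw [show Bo = fromRows (Bl ⊗ₖ (1 : Matrix (Fin mr) (Fin mr) ℂ))
        ((1 : Matrix (Fin ml) (Fin ml) ℂ) ⊗ₖ Br) from rfl,
      show Co = fromCols (Cl ⊗ₖ (1 : Matrix (Fin mr) (Fin mr) ℂ))
        ((1 : Matrix (Fin ml) (Fin ml) ℂ) ⊗ₖ Cr) from rfl, hGo, hM]
    rw [Matrix.fromBlocks_mul_fromRows, Matrix.fromCols_mul_fromRows]
    simp only [Matrix.mul_assoc, kron_mul_kron_assoc, ← Matrix.mul_kronecker_mul,
      Matrix.zero_mul, Matrix.mul_zero, add_zero, zero_add, Matrix.one_mul, Matrix.mul_one,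
      Matrix.mul_add, Matrix.add_mul]
    rw [add_assoc]
  have hFl : Fl = Cl * (Gl * Bl) + 1 := by
    rw [show Fl = Matrix.reindex (Equiv.prodUnique (Fin ml) (Fin 1))
        (Equiv.prodUnique (Fin ml) (Fin 1))
        (((1 : Matrix (Fin ml) (Fin ml) ℂ) ⊗ₖ uᴴ) * C * Ph1 *
          (z • 1 - A)⁻¹ * Ph1 * B * ((1 : Matrix (Fin ml) (Fin ml) ℂ) ⊗ₖ u)) + 1 from rfl]
    congr 1
    rw [show C = Co * T from rfl, show B = T⁻¹ * Bo from rfl,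
      show Ph1 = T⁻¹ * fromBlocks ((1 : Matrix (Fin nl) (Fin nl) ℂ) ⊗ₖ (u * uᴴ)) 0 0
        (0 : Matrix (Fin ml × Fin nr) (Fin ml × Fin nr) ℂ) * T from rfl, hAinv,
      show Bo = fromRows (Bl ⊗ₖ (1 : Matrix (Fin mr) (Fin mr) ℂ))
        ((1 : Matrix (Fin ml) (Fin ml) ℂ) ⊗ₖ Br) from rfl,
      show Co = fromCols (Cl ⊗ₖ (1 : Matrix (Fin mr) (Fin mr) ℂ))
        ((1 : Matrix (Fin ml) (Fin ml) ℂ) ⊗ₖ Cr) from rfl, hGo, hM]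
    simp only [Matrix.mul_assoc, cancel T T⁻¹ hTr]
    simp only [Matrix.fromRows_mul, Matrix.fromBlocks_mul_fromRows,
      Matrix.fromCols_mul_fromRows, kron_mul_kron_assoc, ← Matrix.mul_kronecker_mul,
      Matrix.zero_mul, Matrix.mul_zero, add_zero, zero_add, Matrix.one_mul, Matrix.mul_one,
      cancel uᴴ u hu, hu]
    simp only [Matrix.mul_assoc, cancel uᴴ u hu, hu, Matrix.mul_one]
    exact reindex_prodUnique_kron_one _
  have hFr : Fr = Cr * (Gr * Br) + 1 := by
    rw [show Fr = Matrix.reindex (Equiv.uniqueProd (Fin mr) (Fin 1))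
        (Equiv.uniqueProd (Fin mr) (Fin 1))
        ((vᴴ ⊗ₖ (1 : Matrix (Fin mr) (Fin mr) ℂ)) * C * Ph2 *
          (z • 1 - A)⁻¹ * Ph2 * B * (v ⊗ₖ (1 : Matrix (Fin mr) (Fin mr) ℂ))) + 1 from rfl]
    congr 1
    rw [show C = Co * T from rfl, show B = T⁻¹ * Bo from rfl,
      show Ph2 = T⁻¹ * fromBlocks (0 : Matrix (Fin nl × Fin mr) (Fin nl × Fin mr) ℂ) 0 0
        ((v * vᴴ) ⊗ₖ (1 : Matrix (Fin nr) (Fin nr) ℂ)) * T from rfl, hAinv,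
      show Bo = fromRows (Bl ⊗ₖ (1 : Matrix (Fin mr) (Fin mr) ℂ))
        ((1 : Matrix (Fin ml) (Fin ml) ℂ) ⊗ₖ Br) from rfl,
      show Co = fromCols (Cl ⊗ₖ (1 : Matrix (Fin mr) (Fin mr) ℂ))
        ((1 : Matrix (Fin ml) (Fin ml) ℂ) ⊗ₖ Cr) from rfl, hGo, hM]
    simp only [Matrix.mul_assoc, cancel T T⁻¹ hTr]
    simp only [Matrix.fromRows_mul, Matrix.fromBlocks_mul_fromRows,
      Matrix.fromCols_mul_fromRows, kron_mul_kron_assoc, ← Matrix.mul_kronecker_mul,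
      Matrix.zero_mul, Matrix.mul_zero, add_zero, zero_add, Matrix.one_mul, Matrix.mul_one,
      cancel vᴴ v hv, hv]
    simp only [Matrix.mul_assoc, cancel vᴴ v hv, hv, Matrix.mul_one]
    exact reindex_uniqueProd_one_kron _
  rw [hCB, hXY, hFl, hFr]
  simp only [Matrix.add_kronecker, Matrix.kronecker_add, Matrix.one_kronecker_one]
  abel
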